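/- Let {γ_h}_{h≥1} be a summable nonnegative sequence. For multinomial weights (w_1^{(n)},...,w_n^{(n)}) ~ Multinomial(n; 1/n,...,1/n), the randomized absolute cross term n Σ_{h=1}^{n−1} γ_h Σ_{j=1}^{n−h} |w_j^{(n)}/n − 1/n| · |w_{j+h}^{(n)}/n − 1/n| converges in probability to 4 e^{−2} Σ_{h=1}^∞ γ_h as n → ∞. -/

import Mathlib

open MeasureTheory Finset Filter

/-- The law of `n` i.i.d. uniform draws from `{0,...,n-1}`: the uniform probability
measure on the finite space `Fin n → Fin n`. The multinomial weight vector
`(w_1,...,w_n) ~ Multinomial(n; 1/n,...,1/n)` is obtained from it via `mw`. -/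
noncomputable def multinomialMeasure (n : ℕ) : Measure (Fin n → Fin n) :=
  ((Fintype.card (Fin n → Fin n) : ENNReal))⁻¹ • Measure.count

/-- `mw n i f` is the multinomial weight `w_{i+1}^{(n)}`: the number of draws
(among the `n` draws recorded by `f`) that fall on cell `i`. -/
def mw (n : ℕ) (i : ℕ) (f : Fin n → Fin n) : ℕ :=
  (Finset.univ.filter (fun j => (f j : ℕ) = i)).card

def cw {n : ℕ} (i : Fin n) (f : Fin n → Fin n) : ℕ :=
  (Finset.univ.filter (fun j => f j = i)).card

lemma mw_eq_cw {n i : ℕ} (hi : i < n) (f : Fin n → Fin n) :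
    mw n i f = cw ⟨i, hi⟩ f := by
  unfold mw cw; congr 1; ext j; simp [Fin.ext_iff]

lemma card_pi_filter {k n : ℕ} (S : Fin k → Finset (Fin n)) :
    ((univ : Finset (Fin k → Fin n)).filter fun f => ∀ m, f m ∈ S m).card
      = ∏ m, (S m).card := by
  rw [← Fintype.card_piFinset]
  congr 1
  ext f
  simp [Fintype.mem_piFinset]

def Ninj {n k : ℕ} (c : Fin k → Fin n) (f : Fin n → Fin n) : ℕ :=
  ((univ : Finset (Fin k → Fin n)).filter
    (fun j => Function.Injective j ∧ ∀ t, f (j t) = c t)).card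

/-- number of injective tuples -/
lemma card_injective_filter (k n : ℕ) :
    ((univ : Finset (Fin k → Fin n)).filter Function.Injective).card
      = n.descFactorial k := by
  have h1 : ((univ : Finset (Fin k → Fin n)).filter Function.Injective).card
      = Fintype.card {j : Fin k → Fin n // Function.Injective j} := by
    rw [Fintype.card_subtype]
  rw [h1, Fintype.card_congr (Equiv.subtypeInjectiveEquivEmbedding (Fin k) (Fin n)),
    Fintype.card_embedding_eq, Fintype.card_fin, Fintype.card_fin]

/-- count of f pinned on the range of an injective j and avoiding T elsewhere -/
lemma count_pinned {n k : ℕ} (c : Fin k → Fin n) (T : Finset (Fin n))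
    (hc : ∀ t, c t ∉ T) (j : Fin k → Fin n) (hj : Function.Injective j) :
    ((univ : Finset (Fin n → Fin n)).filter
      (fun f => (∀ t, f (j t) = c t) ∧ ∀ m, f m ∉ T)).card
      = (n - T.card) ^ (n - k) := by
  classical
  set S : Fin n → Finset (Fin n) := fun m =>
    if h : ∃ t, j t = m then {c h.choose} else Tᶜ with hS
  have hfilter : ((univ : Finset (Fin n → Fin n)).filter
      (fun f => (∀ t, f (j t) = c t) ∧ ∀ m, f m ∉ T))
      = (univ : Finset (Fin n → Fin n)).filter (fun f => ∀ m, f m ∈ S m) := by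
    ext f
    simp only [mem_filter, mem_univ, true_and, hS]
    constructor
    · rintro ⟨h1, h2⟩ m
      by_cases h : ∃ t, j t = m
      · rw [dif_pos h]
        simp only [Finset.mem_singleton]
        exact (congrArg f h.choose_spec).symm.trans (h1 _)
      · rw [dif_neg h]
        simpa using h2 m
    · intro h
      constructor
      · intro t
        have := h (j t)
        rw [dif_pos ⟨t, rfl⟩] at this
        simp only [Finset.mem_singleton] at this
        rw [this]
        congr 1
        exact hj ((⟨t, rfl⟩ : ∃ t', j t' = j t).choose_spec)
      · intro m
        have := h m
        by_cases hm : ∃ t, j t = m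
        · rw [dif_pos hm] at this
          simp only [Finset.mem_singleton] at this
          rw [this]
          exact hc _
        · rw [dif_neg hm] at this
          simpa using this
  rw [hfilter, card_pi_filter]
  have hcard : ∀ m, (S m).card = if m ∈ univ.image j then 1 else n - T.card := by
    intro m
    by_cases h : ∃ t, j t = m
    · simp only [hS]
      rw [dif_pos h, if_pos]
      · simp
      · simp only [Finset.mem_image, mem_univ, true_and]; exact h
    · simp only [hS]
      rw [dif_neg h, if_neg]
      · simp [Finset.card_compl]
      · simp only [Finset.mem_image, mem_univ, true_and]; exact h
  rw [Finset.prod_congr rfl (fun m _ => hcard m), Finset.prod_ite, Finset.prod_const_one,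
    one_mul, Finset.prod_const]
  congr 1
  have : (univ.filter (fun m => ¬ m ∈ univ.image j)) = (univ.image j)ᶜ := by
    ext m; simp
  rw [this, Finset.card_compl, Finset.card_image_of_injective _ hj, Fintype.card_fin,
    Finset.card_univ, Fintype.card_fin]

/-- Master counting lemma. -/
lemma ML (c : Fin k → Fin n) (T : Finset (Fin n)) (hc : ∀ t, c t ∉ T) :
    ∑ f : Fin n → Fin n, Ninj c f * (if ∀ m, f m ∉ T then 1 else 0)
      = n.descFactorial k * (n - T.card) ^ (n - k) := by
  classical
  have step1 : ∀ f : Fin n → Fin n,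
      Ninj c f * (if ∀ m, f m ∉ T then 1 else 0)
      = ∑ j : Fin k → Fin n, (if Function.Injective j then
          (if (∀ t, f (j t) = c t) ∧ ∀ m, f m ∉ T then 1 else 0) else 0) := by
    intro f
    rw [Ninj, Finset.card_filter, Finset.sum_mul]
    refine Finset.sum_congr rfl (fun j _ => ?_)
    by_cases h1 : Function.Injective j <;> by_cases h2 : ∀ t, f (j t) = c t <;>
      by_cases h3 : ∀ m, f m ∉ T <;> simp [h1, h2, h3]
  simp_rw [step1]
  rw [Finset.sum_comm]
  have step2 : ∀ j : Fin k → Fin n,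
      (∑ f : Fin n → Fin n, if Function.Injective j then
          (if (∀ t, f (j t) = c t) ∧ ∀ m, f m ∉ T then 1 else 0) else 0)
      = if Function.Injective j then (n - T.card) ^ (n - k) else 0 := by
    intro j
    by_cases hj : Function.Injective j
    · simp only [if_pos hj]
      rw [← count_pinned c T hc j hj, Finset.card_filter]
    · simp [hj]
  simp_rw [step2]
  rw [Finset.sum_ite, Finset.sum_const_zero, add_zero, Finset.sum_const,
    card_injective_filter, smul_eq_mul]

/-- distinct cells: Ninj equals the product of the counts -/
lemma Ninj_of_injective (c : Fin k → Fin n) (hc : Function.Injective c)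
    (f : Fin n → Fin n) : Ninj c f = ∏ t, cw (c t) f := by
  classical
  rw [Ninj]
  have h1 : ((univ : Finset (Fin k → Fin n)).filter
      (fun j => Function.Injective j ∧ ∀ t, f (j t) = c t))
      = (univ : Finset (Fin k → Fin n)).filter
        (fun j => ∀ t, j t ∈ univ.filter (fun m => f m = c t)) := by
    ext j
    simp only [mem_filter, mem_univ, true_and]
    constructor
    · rintro ⟨-, h2⟩ t
      simpa using h2 t
    · intro h
      have h2 : ∀ t, f (j t) = c t := by intro t; simpa using h t
      refine ⟨fun t t' htt' => hc ?_, h2⟩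
      rw [← h2 t, ← h2 t', htt']
  rw [h1, card_pi_filter]
  rfl

/-- constant cell: Ninj equals descending factorial of the count -/
lemma Ninj_const (i : Fin n) (f : Fin n → Fin n) :
    Ninj (fun _ : Fin k => i) f = (cw i f).descFactorial k := by
  classical
  rw [Ninj]
  have h1 : ((univ : Finset (Fin k → Fin n)).filter
      (fun j => Function.Injective j ∧ ∀ t, f (j t) = i)).card
      = Fintype.card {j : Fin k → Fin n // Function.Injective j ∧ ∀ t, f (j t) = i} := by
    rw [Fintype.card_subtype]
  rw [h1]
  have e : {j : Fin k → Fin n // Function.Injective j ∧ ∀ t, f (j t) = i}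
      ≃ (Fin k ↪ {m : Fin n // f m = i}) := by
    refine ⟨fun j => ⟨fun t => ⟨j.1 t, j.2.2 t⟩, fun t t' h => j.2.1 (by
      simpa using congrArg Subtype.val h)⟩,
      fun e => ⟨fun t => (e t).1, fun t t' h => e.injective (Subtype.ext h),
        fun t => (e t).2⟩, ?_, ?_⟩
    · intro j; rfl
    · intro e; rfl
  rw [Fintype.card_congr e, Fintype.card_embedding_eq, Fintype.card_fin]
  congr 1
  rw [Fintype.card_subtype]
  rfl

noncomputable def ew {n : ℕ} (i : Fin n) (f : Fin n → Fin n) : ℝ :=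
  if cw i f = 0 then 1 else 0

lemma cw_eq_zero_iff (i : Fin n) (f : Fin n → Fin n) :
    cw i f = 0 ↔ ∀ m, f m ≠ i := by
  rw [cw, Finset.card_eq_zero, Finset.filter_eq_empty_iff]
  simp

lemma prod_ew (T : Finset (Fin n)) (f : Fin n → Fin n) :
    ∏ i ∈ T, ew i f = if ∀ m, f m ∉ T then 1 else 0 := by
  simp only [ew]
  rw [Finset.prod_boole]
  have h : (∀ i ∈ T, cw i f = 0) ↔ (∀ m, f m ∉ T) := by
    constructor
    · intro h m hm
      exact (cw_eq_zero_iff _ f).mp (h _ hm) m rfl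
    · intro h i hi
      rw [cw_eq_zero_iff]
      intro m hmi
      exact h m (hmi ▸ hi)
  simp only [h]

lemma ELR (A T : Finset (Fin n)) (hAT : Disjoint A T) :
    ∑ f : Fin n → Fin n, (∏ i ∈ A, (cw i f : ℝ)) * ∏ i ∈ T, ew i f
      = ((n.descFactorial A.card * (n - T.card) ^ (n - A.card) : ℕ) : ℝ) := by
  classical
  set k := A.card with hk
  set c : Fin k → Fin n := fun t => (A.equivFin.symm t : Fin n) with hcdef
  have hcinj : Function.Injective c := fun t t' h => by
    apply A.equivFin.symm.injective; exact Subtype.ext h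
  have hcmem : ∀ t, c t ∈ A := fun t => (A.equivFin.symm t).2
  have hcT : ∀ t, c t ∉ T := fun t => Finset.disjoint_left.mp hAT (hcmem t)
  have hprod : ∀ f : Fin n → Fin n, (∏ i ∈ A, cw i f) = ∏ t, cw (c t) f := by
    intro f
    rw [← Finset.prod_coe_sort A (fun i => cw i f)]
    exact (Equiv.prod_comp A.equivFin.symm (fun (x : A) => cw (x : Fin n) f)).symm
  have key : ∀ f : Fin n → Fin n, (∏ i ∈ A, (cw i f : ℝ)) * ∏ i ∈ T, ew i f
      = ((Ninj c f * (if ∀ m, f m ∉ T then 1 else 0) : ℕ) : ℝ) := by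
    intro f
    rw [prod_ew, Ninj_of_injective c hcinj, ← hprod f, ← Nat.cast_prod]
    split_ifs <;> simp
  simp_rw [key]
  rw [← Nat.cast_sum, ML c T hcT]

noncomputable def UMd (d n : ℕ) : ℝ :=
  ∑ S ∈ (univ : Finset (Fin d)).powerset, ∑ A ∈ S.powerset,
    2 ^ ((univ \ S).card) * (-1 : ℝ) ^ ((S \ A).card) *
      ((n.descFactorial A.card * (n - (univ \ S).card) ^ (n - A.card) : ℕ) : ℝ)

noncomputable def aa' {n : ℕ} (i : Fin n) (f : Fin n → Fin n) : ℝ := |(cw i f : ℝ) - 1|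

lemma aa'_split (i : Fin n) (f : Fin n → Fin n) :
    aa' i f = ((cw i f : ℝ) - 1) + 2 * ew i f := by
  rw [aa', ew]
  rcases Nat.eq_zero_or_pos (cw i f) with h | h
  · rw [h, if_pos rfl]
    norm_num
  · rw [if_neg h.ne', mul_zero, add_zero, abs_of_nonneg]
    have : (1:ℝ) ≤ cw i f := by exact_mod_cast h
    linarith

lemma Md_formula {d : ℕ} (c : Fin d → Fin n) (hc : Function.Injective c) :
    ∑ f : Fin n → Fin n, ∏ t, aa' (c t) f = UMd d n := by
  classical
  have expand : ∀ f : Fin n → Fin n, ∏ t, aa' (c t) f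
      = ∑ S ∈ (univ : Finset (Fin d)).powerset, ∑ A ∈ S.powerset,
          2 ^ ((univ \ S).card) * (-1 : ℝ) ^ ((S \ A).card) *
          ((∏ t ∈ A, (cw (c t) f : ℝ)) * ∏ t ∈ univ \ S, ew (c t) f) := by
    intro f
    calc ∏ t, aa' (c t) f
        = ∏ t ∈ univ, (((cw (c t) f : ℝ) - 1) + 2 * ew (c t) f) :=
          Finset.prod_congr rfl fun t _ => aa'_split _ _
      _ = ∑ S ∈ univ.powerset, (∏ t ∈ S, ((cw (c t) f : ℝ) - 1))
            * ∏ t ∈ univ \ S, (2 * ew (c t) f) := Finset.prod_add _ _ _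
      _ = _ := by
          refine Finset.sum_congr rfl fun S hS => ?_
          rw [Finset.prod_mul_distrib, Finset.prod_const]
          have h2 : (∏ t ∈ S, ((cw (c t) f : ℝ) - 1))
              = ∑ A ∈ S.powerset, (∏ t ∈ A, (cw (c t) f : ℝ)) * (-1:ℝ)^((S \ A).card) := by
            have h3 := Finset.prod_add (fun t => (cw (c t) f : ℝ)) (fun _ => (-1:ℝ)) S
            simp only [Finset.prod_const] at h3
            rw [← h3]
            exact Finset.prod_congr rfl fun t _ => by ring
          rw [h2, Finset.sum_mul]
          refine Finset.sum_congr rfl fun A hA => ?_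
          ring
  simp_rw [expand]
  rw [Finset.sum_comm]
  unfold UMd
  refine Finset.sum_congr rfl fun S hS => ?_
  rw [Finset.sum_comm]
  refine Finset.sum_congr rfl fun A hA => ?_
  rw [← Finset.mul_sum]
  congr 1
  have hAS : A ⊆ S := Finset.mem_powerset.mp hA
  have hdisj : Disjoint (A.image c) ((univ \ S).image c) :=
    (Finset.disjoint_image hc).mpr ((Finset.disjoint_sdiff).mono_left hAS)
  have h5 := ELR (A.image c) ((univ \ S).image c) hdisj
  rw [Finset.card_image_of_injective _ hc, Finset.card_image_of_injective _ hc] at h5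
  rw [← h5]
  refine Finset.sum_congr rfl fun f _ => ?_
  rw [Finset.prod_image (fun x _ y _ h => hc h), Finset.prod_image (fun x _ y _ h => hc h)]

lemma term_tendsto (a u : ℕ) :
    Tendsto (fun n : ℕ => ((n.descFactorial a * (n - u) ^ (n - a) : ℕ) : ℝ) / (n:ℝ)^n)
      atTop (nhds (Real.exp (-(u:ℝ)))) := by
  have hev : (fun n : ℕ => ((n.descFactorial a * (n - u) ^ (n - a) : ℕ) : ℝ) / (n:ℝ)^n)
      =ᶠ[atTop] (fun n : ℕ => (∏ i ∈ range a, (1 - (i:ℝ)/n)) *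
        ((1 + (-(u:ℝ))/n)^n / (1 + (-(u:ℝ))/n)^a)) := by
    filter_upwards [eventually_ge_atTop (a + u + 1)] with n hn
    have hn0 : (0:ℝ) < n := by exact_mod_cast (by omega : 0 < n)
    have hb : (1 + (-(u:ℝ))/n) = ((n:ℝ) - u)/n := by field_simp; ring
    have hnu0 : (0:ℝ) < (n:ℝ) - u := by
      have : (u:ℝ) < n := by exact_mod_cast (by omega : u < n)
      linarith
    rw [hb]
    obtain ⟨m, rfl⟩ : ∃ m, n = a + m := ⟨n - a, by omega⟩
    have hma : a + m - a = m := by omega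
    rw [hma]
    have hcast1 : ((a + m - u : ℕ) : ℝ) = ((a+m : ℕ):ℝ) - u := by
      have : u ≤ a + m := by omega
      push_cast [this]; ring
    have hcast2 : ((a+m).descFactorial a : ℝ) = ∏ i ∈ range a, (((a+m:ℕ):ℝ) - i) := by
      rw [Nat.descFactorial_eq_prod_range, Nat.cast_prod]
      refine Finset.prod_congr rfl fun i hi => ?_
      have : i ≤ a + m := by have := Finset.mem_range.mp hi; omega
      push_cast [this]; ring
    have hprod : (∏ i ∈ range a, (1 - (i:ℝ)/((a+m:ℕ):ℝ)))
        = (∏ i ∈ range a, (((a+m:ℕ):ℝ) - i)) / ((a+m:ℕ):ℝ)^a := by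
      have e1 : ∀ i ∈ range a, (1 - (i:ℝ)/((a+m:ℕ):ℝ)) = (((a+m:ℕ):ℝ) - i)/((a+m:ℕ):ℝ) := by
        intro i hi; rw [sub_div, div_self (ne_of_gt hn0)]
      rw [Finset.prod_congr rfl e1, Finset.prod_div_distrib, Finset.prod_const,
        Finset.card_range]
    rw [Nat.cast_mul, hcast2, Nat.cast_pow, hcast1, hprod,
      pow_add (((((a+m:ℕ):ℝ)) - u)/((a+m:ℕ):ℝ)) a m,
      mul_comm ((((((a+m:ℕ):ℝ)) - u)/((a+m:ℕ):ℝ))^a),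
      mul_div_assoc, mul_div_cancel_right₀ _ (by positivity), div_pow]
    rw [pow_add ((a+m:ℕ):ℝ) a m]
    field_simp
  refine Tendsto.congr' hev.symm ?_
  have h1 : Tendsto (fun n : ℕ => ∏ i ∈ range a, (1 - (i:ℝ)/n)) atTop (nhds 1) := by
    have := tendsto_finset_prod (f := fun (i : ℕ) (n : ℕ) => 1 - (i:ℝ)/n)
      (a := fun _ => (1:ℝ)) (x := atTop) (range a)
      (fun i _ => by simpa using tendsto_const_nhds.sub (tendsto_const_div_atTop_nhds_zero_nat (i:ℝ)))
    simpa using this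
  have h2 : Tendsto (fun n : ℕ => (1 + (-(u:ℝ))/n)^n) atTop (nhds (Real.exp (-(u:ℝ)))) :=
    Real.tendsto_one_add_div_pow_exp _
  have h3 : Tendsto (fun n : ℕ => (1 + (-(u:ℝ))/n)^a) atTop (nhds 1) := by
    have hb : Tendsto (fun n : ℕ => 1 + (-(u:ℝ))/n) atTop (nhds 1) := by
      simpa using tendsto_const_nhds.add (tendsto_const_div_atTop_nhds_zero_nat (-(u:ℝ)))
    simpa using hb.pow a
  have := h1.mul (h2.div h3 one_ne_zero)
  simpa using this

lemma innerAltSum (d : ℕ) (S : Finset (Fin d)) :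
    (∑ A ∈ S.powerset, (-1:ℝ)^((S \ A).card)) = if S = ∅ then 1 else 0 := by
  have h := Finset.prod_add (fun _ : Fin d => (1:ℝ)) (fun _ => (-1:ℝ)) S
  simp only [Finset.prod_const_one, one_mul, Finset.prod_const] at h
  have h0 : ((1:ℝ) + -1) = 0 := by norm_num
  rw [h0, zero_pow_eq] at h
  rw [← h]
  simp [Finset.card_eq_zero]

lemma Lval (d : ℕ) :
    (∑ S ∈ (univ : Finset (Fin d)).powerset, ∑ A ∈ S.powerset,
      2 ^ ((univ \ S).card) * (-1 : ℝ)^((S \ A).card)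
        * Real.exp (-(((univ \ S).card : ℕ):ℝ)))
      = (2 * Real.exp (-1))^d := by
  have step : ∀ S ∈ (univ : Finset (Fin d)).powerset,
      (∑ A ∈ S.powerset, 2 ^ ((univ \ S).card) * (-1 : ℝ)^((S \ A).card)
        * Real.exp (-(((univ \ S).card : ℕ):ℝ)))
      = (2 ^ ((univ \ S).card) * Real.exp (-(((univ \ S).card : ℕ):ℝ)))
        * (if S = ∅ then 1 else 0) := by
    intro S _
    rw [← innerAltSum d S, Finset.mul_sum]
    exact Finset.sum_congr rfl fun A _ => by ring
  rw [Finset.sum_congr rfl step, Finset.sum_eq_single ∅]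
  · simp only [Finset.sdiff_empty, if_pos rfl, mul_one, Finset.card_univ, Fintype.card_fin]
    rw [mul_pow, ← Real.exp_nat_mul]
    norm_num
  · intro S _ hS
    rw [if_neg hS, mul_zero]
  · intro h
    exact absurd (Finset.empty_mem_powerset _) h

lemma UMd_div_tendsto (d : ℕ) :
    Tendsto (fun n : ℕ => UMd d n / (n:ℝ)^n) atTop (nhds ((2 * Real.exp (-1))^d)) := by
  have heq : ∀ n : ℕ, UMd d n / (n:ℝ)^n
      = ∑ S ∈ (univ : Finset (Fin d)).powerset, ∑ A ∈ S.powerset,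
          2 ^ ((univ \ S).card) * (-1 : ℝ) ^ ((S \ A).card) *
          (((n.descFactorial A.card * (n - (univ \ S).card) ^ (n - A.card) : ℕ) : ℝ) / (n:ℝ)^n) := by
    intro n
    rw [UMd, Finset.sum_div]
    exact Finset.sum_congr rfl fun S _ => by
      rw [Finset.sum_div]
      exact Finset.sum_congr rfl fun A _ => by rw [mul_div_assoc]
  rw [show (2 * Real.exp (-1))^d = (∑ S ∈ (univ : Finset (Fin d)).powerset, ∑ A ∈ S.powerset,
      2 ^ ((univ \ S).card) * (-1 : ℝ)^((S \ A).card)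
        * Real.exp (-(((univ \ S).card : ℕ):ℝ))) from (Lval d).symm]
  refine Tendsto.congr (fun n => (heq n).symm) ?_
  refine tendsto_finset_sum _ fun S _ => ?_
  refine tendsto_finset_sum _ fun A _ => ?_
  exact (tendsto_const_nhds.mul (term_tendsto A.card ((univ \ S).card)))

lemma amgm4 (a b c d : ℝ) (ha : 0 ≤ a) (hb : 0 ≤ b) (hc : 0 ≤ c) (hd : 0 ≤ d) :
    a * b * c * d ≤ (a^4 + b^4 + c^4 + d^4)/4 := by
  nlinarith [sq_nonneg (a*b - c*d), sq_nonneg (a^2 - b^2), sq_nonneg (c^2 - d^2),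
    mul_nonneg ha hb, mul_nonneg hc hd, sq_nonneg (a*b + c*d), mul_nonneg (mul_nonneg ha hb) hc]

lemma nat_pow4_bound (w : ℕ) : (w + 1)^4 ≤ 16 * w.descFactorial 4 + 4096 := by
  rcases le_or_gt w 7 with h | h
  · calc (w+1)^4 ≤ 8^4 := Nat.pow_le_pow_left (by omega) 4
      _ ≤ 16 * w.descFactorial 4 + 4096 := by norm_num
  · obtain ⟨s, rfl⟩ : ∃ s, w = s + 3 := ⟨w - 3, by omega⟩
    have hs : 4 ≤ s := by omega
    have hd : (s+3).descFactorial 4 = s * (s+1) * (s+2) * (s+3) := by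
      simp [Nat.descFactorial]
      ring
    rw [hd]
    nlinarith [hs]


lemma sum_descFactorial_cw (i : Fin n) (k : ℕ) :
    ∑ f : Fin n → Fin n, (cw i f).descFactorial k = n.descFactorial k * n ^ (n - k) := by
  have h := ML (fun _ : Fin k => i) (∅ : Finset (Fin n)) (by simp)
  simpa [Ninj_const] using h

lemma card_fun_eq : (Fintype.card (Fin n → Fin n)) = n ^ n := by
  simp [Fintype.card_fun]

lemma descF_pow_le : n.descFactorial 4 * n ^ (n-4) ≤ n^n := by
  rcases le_or_gt 4 n with h | h
  · calc n.descFactorial 4 * n^(n-4) ≤ n^4 * n^(n-4) :=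
        Nat.mul_le_mul_right _ (Nat.descFactorial_le_pow _ _)
      _ = n^n := by rw [← pow_add]; congr 1; omega
  · have h0 : n.descFactorial 4 = 0 := Nat.descFactorial_eq_zero_iff_lt.mpr h
    rw [h0]; simp

lemma sum_aa_pow4_le (i : Fin n) :
    ∑ f : Fin n → Fin n, (aa' i f)^4 ≤ 4112 * (n:ℝ)^n := by
  have key : ∀ f, (aa' i f)^4 ≤ ((16 * (cw i f).descFactorial 4 + 4096 : ℕ) : ℝ) := by
    intro f
    have hw : (0:ℝ) ≤ (cw i f : ℝ) := Nat.cast_nonneg _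
    have h2 : aa' i f ≤ ((cw i f + 1 : ℕ) : ℝ) := by
      rw [aa', abs_le]; push_cast; constructor <;> linarith
    have h3 : (aa' i f)^4 ≤ (((cw i f + 1 : ℕ)):ℝ)^4 :=
      pow_le_pow_left₀ (abs_nonneg _) h2 4
    refine h3.trans ?_
    rw [← Nat.cast_pow]
    exact_mod_cast nat_pow4_bound (cw i f)
  calc ∑ f : Fin n → Fin n, (aa' i f)^4
      ≤ ∑ f : Fin n → Fin n, ((16 * (cw i f).descFactorial 4 + 4096 : ℕ) : ℝ) :=
        Finset.sum_le_sum fun f _ => key f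
    _ = ((∑ f : Fin n → Fin n, (16 * (cw i f).descFactorial 4 + 4096) : ℕ) : ℝ) :=
        (Nat.cast_sum _ _).symm
    _ = ((16 * (n.descFactorial 4 * n ^ (n-4)) + n^n * 4096 : ℕ) : ℝ) := by
        rw [Finset.sum_add_distrib, ← Finset.mul_sum, sum_descFactorial_cw, Finset.sum_const,
          Finset.card_univ, card_fun_eq, smul_eq_mul]
    _ ≤ ((16 * n^n + n^n * 4096 : ℕ) : ℝ) := by
        exact_mod_cast Nat.add_le_add_right
          (Nat.mul_le_mul_left _ (descF_pow_le (n := n))) _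
    _ = 4112 * (n:ℝ)^n := by push_cast; ring

lemma B4 (i1 i2 i3 i4 : Fin n) :
    ∑ f : Fin n → Fin n, aa' i1 f * aa' i2 f * aa' i3 f * aa' i4 f ≤ 4112 * (n:ℝ)^n := by
  have key : ∀ f : Fin n → Fin n, aa' i1 f * aa' i2 f * aa' i3 f * aa' i4 f
      ≤ ((aa' i1 f)^4 + (aa' i2 f)^4 + (aa' i3 f)^4 + (aa' i4 f)^4)/4 :=
    fun f => amgm4 _ _ _ _ (abs_nonneg _) (abs_nonneg _) (abs_nonneg _) (abs_nonneg _)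
  calc ∑ f : Fin n → Fin n, aa' i1 f * aa' i2 f * aa' i3 f * aa' i4 f
      ≤ ∑ f : Fin n → Fin n, ((aa' i1 f)^4 + (aa' i2 f)^4 + (aa' i3 f)^4 + (aa' i4 f)^4)/4 :=
        Finset.sum_le_sum fun f _ => key f
    _ = ((∑ f : Fin n → Fin n, (aa' i1 f)^4) + (∑ f : Fin n → Fin n, (aa' i2 f)^4)
        + (∑ f : Fin n → Fin n, (aa' i3 f)^4) + (∑ f : Fin n → Fin n, (aa' i4 f)^4))/4 := by
        rw [← Finset.sum_div, Finset.sum_add_distrib, Finset.sum_add_distrib,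
          Finset.sum_add_distrib]
    _ ≤ (4112 * (n:ℝ)^n + 4112 * (n:ℝ)^n + 4112 * (n:ℝ)^n + 4112 * (n:ℝ)^n)/4 := by
        have := sum_aa_pow4_le i1
        have := sum_aa_pow4_le i2
        have := sum_aa_pow4_le i3
        have := sum_aa_pow4_le i4
        gcongr <;> assumption
    _ = 4112 * (n:ℝ)^n := by ring

lemma G_tendsto (γ : ℕ → ℝ) (hpos : ∀ h, 1 ≤ h → 0 ≤ γ h)
    (hγ : Summable fun h : ℕ => γ (h + 1)) :
    Tendsto (fun n : ℕ => ∑ h ∈ Ico 1 n, γ h * (((n - h : ℕ):ℝ) / n)) atTop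
      (nhds (∑' h : ℕ, γ (h + 1))) := by
  set Γ := ∑' h : ℕ, γ (h + 1) with hΓ
  have hP : ∀ n : ℕ, ∑ h ∈ Ico 1 n, γ h = ∑ i ∈ range (n-1), γ (i+1) := by
    intro n
    rw [Finset.sum_Ico_eq_sum_range]
    exact Finset.sum_congr rfl fun i _ => by rw [add_comm]
  have hPle : ∀ n : ℕ, ∑ h ∈ Ico 1 n, γ h ≤ Γ := by
    intro n; rw [hP]
    exact Summable.sum_le_tsum _ (fun i _ => hpos _ (by omega)) hγ
  have hPtend : Tendsto (fun n : ℕ => ∑ h ∈ Ico 1 n, γ h) atTop (nhds Γ) := by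
    have h1 := hγ.hasSum.tendsto_sum_nat
    have h2 : Tendsto (fun n : ℕ => n - 1) atTop atTop :=
      tendsto_sub_atTop_nat 1
    exact Tendsto.congr (fun n => (hP n).symm) (h1.comp h2)
  rw [Metric.tendsto_atTop]
  intro ε hε
  obtain ⟨m, hm1, hm⟩ : ∃ m : ℕ, 1 ≤ m ∧ Γ - ∑ h ∈ Ico 1 m, γ h < ε/3 := by
    rw [Metric.tendsto_atTop] at hPtend
    obtain ⟨N, hN⟩ := hPtend (ε/3) (by linarith)
    refine ⟨N + 1, by omega, ?_⟩
    have h3 := hN (N+1) (by omega)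
    rw [Real.dist_eq] at h3
    have h4 := abs_lt.mp h3
    linarith [h4.1]
  set C := ∑ h ∈ Ico 1 m, γ h * h with hC
  have hC0 : 0 ≤ C := Finset.sum_nonneg fun h hh =>
    mul_nonneg (hpos h (Finset.mem_Ico.mp hh).1) (Nat.cast_nonneg h)
  obtain ⟨N, hN⟩ : ∃ N : ℕ, ∀ n ≥ N, C / n < ε/3 := by
    have := tendsto_const_div_atTop_nhds_zero_nat C
    rw [Metric.tendsto_atTop] at this
    obtain ⟨N, hN⟩ := this (ε/3) (by linarith)
    exact ⟨N, fun n hn => by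
      have := hN n hn
      rw [Real.dist_eq, sub_zero] at this
      exact (le_abs_self _).trans_lt this⟩
  refine ⟨max m N, fun n hn => ?_⟩
  have hmn : m ≤ n := le_trans (le_max_left _ _) hn
  have hNn : N ≤ n := le_trans (le_max_right _ _) hn
  have hn0 : (0:ℝ) < n := by
    have : 1 ≤ n := le_trans hm1 hmn
    exact_mod_cast this
  set D := ∑ h ∈ Ico m n, γ h * h with hD
  have hD0 : 0 ≤ D := Finset.sum_nonneg fun h hh =>
    mul_nonneg (hpos h (le_trans hm1 (Finset.mem_Ico.mp hh).1)) (Nat.cast_nonneg h)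
  have hsplit : ∑ h ∈ Ico 1 n, γ h * h = C + D := by
    rw [hC, hD, Finset.sum_Ico_consecutive _ hm1 hmn]
  have hGn : ∑ h ∈ Ico 1 n, γ h * (((n - h : ℕ):ℝ) / n)
      = (∑ h ∈ Ico 1 n, γ h) - (C + D)/n := by
    have e : ∀ h ∈ Ico 1 n, γ h * (((n - h : ℕ):ℝ) / n) = γ h - γ h * h/n := by
      intro h hh
      have hhn : h ≤ n := le_of_lt (Finset.mem_Ico.mp hh).2
      rw [Nat.cast_sub hhn]
      field_simp
    rw [Finset.sum_congr rfl e, Finset.sum_sub_distrib, ← Finset.sum_div, hsplit]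
  have hDle : D / n ≤ (∑ h ∈ Ico 1 n, γ h) - (∑ h ∈ Ico 1 m, γ h) := by
    have h6 : D ≤ (∑ h ∈ Ico m n, γ h) * n := by
      rw [hD, Finset.sum_mul]
      refine Finset.sum_le_sum fun h hh => ?_
      have : (h:ℝ) ≤ n := by exact_mod_cast le_of_lt (Finset.mem_Ico.mp hh).2
      exact mul_le_mul_of_nonneg_left this
        (hpos h (le_trans hm1 (Finset.mem_Ico.mp hh).1))
    have h7 : (∑ h ∈ Ico m n, γ h) = (∑ h ∈ Ico 1 n, γ h) - (∑ h ∈ Ico 1 m, γ h) := by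
      rw [← Finset.sum_Ico_consecutive _ hm1 hmn]; ring
    rw [div_le_iff₀ hn0, ← h7]
    exact h6
  have hCn := hN n hNn
  have hPn := hPle n
  rw [Real.dist_eq, hGn]
  have hnonneg : 0 ≤ (C + D)/n := div_nonneg (by linarith) (le_of_lt hn0)
  rw [abs_sub_comm, abs_of_nonneg (by linarith)]
  have hCD : (C + D)/n = C/n + D/n := add_div _ _ _
  linarith

noncomputable def aaN (n i : ℕ) (f : Fin n → Fin n) : ℝ := |(mw n i f : ℝ) - 1|

lemma aaN_eq {n i : ℕ} (hi : i < n) (f : Fin n → Fin n) :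
    aaN n i f = aa' ⟨i, hi⟩ f := by
  rw [aaN, aa', mw_eq_cw hi]

lemma F1 {n j h : ℕ} (h1 : 1 ≤ h) (hjn : j + h < n) :
    ∑ f : Fin n → Fin n, aaN n j f * aaN n (j + h) f = UMd 2 n := by
  have hj : j < n := by omega
  have hc : Function.Injective (![⟨j, hj⟩, ⟨j + h, hjn⟩] : Fin 2 → Fin n) := by
    intro a b hab
    fin_cases a <;> fin_cases b <;> simp_all [Fin.ext_iff] <;> omega
  rw [← Md_formula _ hc]
  refine Finset.sum_congr rfl fun f _ => ?_
  rw [Fin.prod_univ_two, aaN_eq hj, aaN_eq hjn]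
  simp

lemma F2 {n p q r s : ℕ} (hp : p < n) (hq : q < n) (hr : r < n) (hs : s < n)
    (hpq : p ≠ q) (hpr : p ≠ r) (hps : p ≠ s) (hqr : q ≠ r) (hqs : q ≠ s) (hrs : r ≠ s) :
    ∑ f : Fin n → Fin n, (aaN n p f * aaN n q f) * (aaN n r f * aaN n s f) = UMd 4 n := by
  have hc : Function.Injective (![⟨p, hp⟩, ⟨q, hq⟩, ⟨r, hr⟩, ⟨s, hs⟩] : Fin 4 → Fin n) := by
    intro a b hab
    fin_cases a <;> fin_cases b <;> simp_all [Fin.ext_iff]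
  rw [← Md_formula _ hc]
  refine Finset.sum_congr rfl fun f _ => ?_
  rw [Fin.prod_univ_four, aaN_eq hp, aaN_eq hq, aaN_eq hr, aaN_eq hs]
  simp
  ring

lemma B4N {n p q r s : ℕ} (hp : p < n) (hq : q < n) (hr : r < n) (hs : s < n) :
    ∑ f : Fin n → Fin n, (aaN n p f * aaN n q f) * (aaN n r f * aaN n s f)
      ≤ 4112 * (n:ℝ)^n := by
  have := B4 (⟨p, hp⟩ : Fin n) ⟨q, hq⟩ ⟨r, hr⟩ ⟨s, hs⟩
  refine le_trans (le_of_eq ?_) this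
  refine Finset.sum_congr rfl fun f _ => ?_
  rw [aaN_eq hp, aaN_eq hq, aaN_eq hr, aaN_eq hs]
  ring

lemma S4_nonneg {n p q r s : ℕ} :
    0 ≤ ∑ f : Fin n → Fin n, (aaN n p f * aaN n q f) * (aaN n r f * aaN n s f) :=
  Finset.sum_nonneg fun f _ =>
    mul_nonneg (mul_nonneg (abs_nonneg _) (abs_nonneg _))
      (mul_nonneg (abs_nonneg _) (abs_nonneg _))

noncomputable def Xf (γ : ℕ → ℝ) (n : ℕ) (f : Fin n → Fin n) : ℝ :=
  (1/(n:ℝ)) * ∑ h ∈ Ico 1 n, γ h * ∑ j ∈ range (n - h), aaN n j f * aaN n (j + h) f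
noncomputable def S4 (n j h j' h' : ℕ) : ℝ :=
  ∑ f : Fin n → Fin n, (aaN n j f * aaN n (j + h) f) * (aaN n j' f * aaN n (j' + h') f)
noncomputable def U4 (n : ℕ) : ℝ := UMd 4 n / (n:ℝ)^n
noncomputable def U2 (n : ℕ) : ℝ := UMd 2 n / (n:ℝ)^n
noncomputable def Gn (γ : ℕ → ℝ) (n : ℕ) : ℝ :=
  ∑ h ∈ Ico 1 n, γ h * (((n - h : ℕ):ℝ)/n)

lemma EX_eq (γ : ℕ → ℝ) (n : ℕ) (hn : 1 ≤ n) :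
    (∑ f : Fin n → Fin n, Xf γ n f) / (n:ℝ)^n = U2 n * Gn γ n := by
  have hnn : (0:ℝ) < (n:ℝ)^n := by positivity
  have key : ∑ f : Fin n → Fin n, Xf γ n f
      = (1/(n:ℝ)) * ∑ h ∈ Ico 1 n, γ h * (((n - h : ℕ):ℝ) * UMd 2 n) := by
    simp only [Xf]
    rw [← Finset.mul_sum, Finset.sum_comm]
    congr 1
    refine Finset.sum_congr rfl fun h hh => ?_
    rw [← Finset.mul_sum, Finset.sum_comm]
    congr 1
    have e : ∀ j ∈ range (n - h), ∑ f : Fin n → Fin n, aaN n j f * aaN n (j + h) f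
        = UMd 2 n := by
      intro j hj
      have hh1 : 1 ≤ h := (Finset.mem_Ico.mp hh).1
      have hjh : j + h < n := by
        have := Finset.mem_range.mp hj; omega
      exact F1 hh1 hjh
    rw [Finset.sum_congr rfl e, Finset.sum_const, Finset.card_range, nsmul_eq_mul]
  have hn0 : (0:ℝ) < n := by exact_mod_cast hn
  rw [key, U2, Gn, Finset.mul_sum, Finset.mul_sum, Finset.sum_div]
  refine Finset.sum_congr rfl fun h hh => ?_
  field_simp

lemma EX2_id (γ : ℕ → ℝ) (n : ℕ) :
    ∑ f : Fin n → Fin n, (Xf γ n f)^2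
      = (1/(n:ℝ))^2 * ∑ h ∈ Ico 1 n, ∑ h' ∈ Ico 1 n, (γ h * γ h') *
          ∑ j ∈ range (n - h), ∑ j' ∈ range (n - h'), S4 n j h j' h' := by
  have point : ∀ f : Fin n → Fin n, (Xf γ n f)^2
      = (1/(n:ℝ))^2 * ∑ h ∈ Ico 1 n, ∑ h' ∈ Ico 1 n, (γ h * γ h') *
          ∑ j ∈ range (n - h), ∑ j' ∈ range (n - h'),
            (aaN n j f * aaN n (j + h) f) * (aaN n j' f * aaN n (j' + h') f) := by
    intro f
    rw [Xf, mul_pow]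
    congr 1
    rw [sq, Finset.sum_mul_sum]
    refine Finset.sum_congr rfl fun h _ => ?_
    refine Finset.sum_congr rfl fun h' _ => ?_
    rw [mul_mul_mul_comm, Finset.sum_mul_sum]
  simp_rw [point]
  rw [← Finset.mul_sum]
  congr 1
  rw [Finset.sum_comm]
  refine Finset.sum_congr rfl fun h _ => ?_
  rw [Finset.sum_comm]
  refine Finset.sum_congr rfl fun h' _ => ?_
  rw [← Finset.mul_sum]
  congr 1
  rw [Finset.sum_comm]
  refine Finset.sum_congr rfl fun j _ => ?_
  rw [Finset.sum_comm]
  rfl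

lemma inner_bound {n h h' j : ℕ} (hn4 : 4 ≤ n) (hh : h ∈ Ico 1 n) (hh' : h' ∈ Ico 1 n)
    (hj : j < n - h) :
    |∑ j' ∈ range (n - h'), (S4 n j h j' h' / (n:ℝ)^n - U4 n)| ≤ 32896 := by
  classical
  have hnn : (0:ℝ) < (n:ℝ)^n := by positivity
  have hh1 : 1 ≤ h := (Finset.mem_Ico.mp hh).1
  have hh'1 : 1 ≤ h' := (Finset.mem_Ico.mp hh').1
  have hU4a : 0 ≤ U4 n ∧ U4 n ≤ 4112 := by
    have he := F2 (n := n) (p := 0) (q := 1) (r := 2) (s := 3)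
      (by omega) (by omega) (by omega) (by omega)
      (by omega) (by omega) (by omega) (by omega) (by omega) (by omega)
    constructor
    · rw [U4, ← he]
      exact div_nonneg S4_nonneg (le_of_lt hnn)
    · rw [U4, div_le_iff₀ hnn, ← he]
      have := B4N (n := n) (p := 0) (q := 1) (r := 2) (s := 3)
        (by omega) (by omega) (by omega) (by omega)
      linarith
  set E : Finset ℕ := {j, j + h, j - h', j + h - h'} with hE
  have hvanish : ∀ j' ∈ range (n - h'), j' ∉ E → S4 n j h j' h' / (n:ℝ)^n - U4 n = 0 := by
    intro j' hj' hjE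
    have hj'r := Finset.mem_range.mp hj'
    have hne : j' ≠ j ∧ j' ≠ j + h ∧ j' ≠ j - h' ∧ j' ≠ j + h - h' := by
      simp only [hE, Finset.mem_insert, Finset.mem_singleton] at hjE
      tauto
    have hF2 := F2 (n := n) (p := j) (q := j + h) (r := j') (s := j' + h')
      (by omega) (by omega) (by omega) (by omega)
      (by omega) (by omega) (by omega) (by omega) (by omega) (by omega)
    rw [S4, hF2, U4, sub_self]
  have hterm : ∀ j' ∈ range (n - h'), |S4 n j h j' h' / (n:ℝ)^n - U4 n| ≤ 8224 := by
    intro j' hj'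
    have hj'r := Finset.mem_range.mp hj'
    have h0 : 0 ≤ S4 n j h j' h' / (n:ℝ)^n := div_nonneg S4_nonneg (le_of_lt hnn)
    have h1 : S4 n j h j' h' / (n:ℝ)^n ≤ 4112 := by
      rw [div_le_iff₀ hnn, S4]
      exact B4N (by omega) (by omega) (by omega) (by omega)
    rw [abs_le]
    constructor
    · linarith [hU4a.2]
    · linarith [hU4a.1]
  have hsum : ∑ j' ∈ range (n - h'), (S4 n j h j' h' / (n:ℝ)^n - U4 n)
      = ∑ j' ∈ (range (n - h')).filter (· ∈ E), (S4 n j h j' h' / (n:ℝ)^n - U4 n) :=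
    (Finset.sum_filter_of_ne (fun x hx hne => by
      by_contra hc
      exact hne (hvanish x hx hc))).symm
  have hsubE : (range (n - h')).filter (· ∈ E) ⊆ E := fun x hx =>
    (Finset.mem_filter.mp hx).2
  have hcE : E.card ≤ 4 := by
    rw [hE]
    refine le_trans (Finset.card_insert_le _ _) ?_
    have h2 := Finset.card_insert_le (j + h) ({j - h', j + h - h'} : Finset ℕ)
    have h3 := Finset.card_insert_le (j - h') ({j + h - h'} : Finset ℕ)
    simp only [Finset.card_singleton] at *
    omega
  rw [hsum]
  calc |∑ j' ∈ (range (n - h')).filter (· ∈ E), (S4 n j h j' h' / (n:ℝ)^n - U4 n)|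
      ≤ ∑ j' ∈ (range (n - h')).filter (· ∈ E), |S4 n j h j' h' / (n:ℝ)^n - U4 n| :=
        Finset.abs_sum_le_sum_abs _ _
    _ ≤ ∑ _j' ∈ (range (n - h')).filter (· ∈ E), (8224:ℝ) :=
        Finset.sum_le_sum fun x hx => hterm x (Finset.mem_filter.mp hx).1
    _ = ((range (n - h')).filter (· ∈ E)).card * 8224 := by
        rw [Finset.sum_const, nsmul_eq_mul]
    _ ≤ 4 * 8224 := by
        have := le_trans (Finset.card_le_card hsubE) hcE
        have h4 : (((range (n - h')).filter (· ∈ E)).card : ℝ) ≤ 4 := by exact_mod_cast this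
        nlinarith
    _ = 32896 := by norm_num

lemma EX2_bound (γ : ℕ → ℝ) (hpos : ∀ h, 1 ≤ h → 0 ≤ γ h) (n : ℕ) (hn4 : 4 ≤ n) :
    |(∑ f : Fin n → Fin n, (Xf γ n f)^2)/(n:ℝ)^n - U4 n * (Gn γ n)^2|
      ≤ 32896 * (∑ h ∈ Ico 1 n, γ h)^2 / n := by
  have hn0 : (0:ℝ) < n := by exact_mod_cast (by omega : 0 < n)
  have hnn : (0:ℝ) < (n:ℝ)^n := by positivity
  have key : (∑ f : Fin n → Fin n, (Xf γ n f)^2)/(n:ℝ)^n - U4 n * (Gn γ n)^2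
      = (1/(n:ℝ))^2 * ∑ h ∈ Ico 1 n, ∑ h' ∈ Ico 1 n, (γ h * γ h') *
          ∑ j ∈ range (n - h), ∑ j' ∈ range (n - h'),
            (S4 n j h j' h' / (n:ℝ)^n - U4 n) := by
    have hG2 : (Gn γ n)^2 = ∑ h ∈ Ico 1 n, ∑ h' ∈ Ico 1 n,
        (γ h * (((n - h : ℕ):ℝ)/n)) * (γ h' * (((n - h' : ℕ):ℝ)/n)) := by
      rw [Gn, sq, Finset.sum_mul_sum]
    rw [EX2_id, hG2, mul_div_assoc, Finset.sum_div,
      Finset.mul_sum, Finset.mul_sum _ _ (U4 n), ← Finset.sum_sub_distrib, Finset.mul_sum]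
    refine Finset.sum_congr rfl fun h hh => ?_
    rw [Finset.sum_div, Finset.mul_sum, Finset.mul_sum, ← Finset.sum_sub_distrib,
      Finset.mul_sum]
    refine Finset.sum_congr rfl fun h' hh' => ?_
    have e1 : ∑ j ∈ range (n - h), ∑ j' ∈ range (n - h'),
        (S4 n j h j' h' / (n:ℝ)^n - U4 n)
        = (∑ j ∈ range (n - h), ∑ j' ∈ range (n - h'), S4 n j h j' h')/(n:ℝ)^n
          - ((n - h : ℕ) : ℝ) * (((n - h' : ℕ) : ℝ) * U4 n) := by
      simp only [Finset.sum_sub_distrib, Finset.sum_const, Finset.card_range,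
        nsmul_eq_mul, Finset.sum_div]
    rw [e1]
    ring
  rw [key]
  have hstep : ∀ h ∈ Ico 1 n, ∀ h' ∈ Ico 1 n,
      |(γ h * γ h') * ∑ j ∈ range (n - h), ∑ j' ∈ range (n - h'),
          (S4 n j h j' h' / (n:ℝ)^n - U4 n)|
        ≤ (γ h * γ h') * ((n:ℝ) * 32896) := by
    intro h hh h' hh'
    have hγγ : 0 ≤ γ h * γ h' :=
      mul_nonneg (hpos h (Finset.mem_Ico.mp hh).1) (hpos h' (Finset.mem_Ico.mp hh').1)
    rw [abs_mul, abs_of_nonneg hγγ]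
    refine mul_le_mul_of_nonneg_left ?_ hγγ
    calc |∑ j ∈ range (n - h), ∑ j' ∈ range (n - h'),
            (S4 n j h j' h' / (n:ℝ)^n - U4 n)|
        ≤ ∑ j ∈ range (n - h), |∑ j' ∈ range (n - h'),
            (S4 n j h j' h' / (n:ℝ)^n - U4 n)| := Finset.abs_sum_le_sum_abs _ _
      _ ≤ ∑ _j ∈ range (n - h), (32896:ℝ) := Finset.sum_le_sum fun j hj =>
          inner_bound hn4 hh hh' (Finset.mem_range.mp hj)
      _ = ((n - h : ℕ):ℝ) * 32896 := by
          rw [Finset.sum_const, Finset.card_range, nsmul_eq_mul]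
      _ ≤ (n:ℝ) * 32896 := by
          have : ((n - h : ℕ):ℝ) ≤ (n:ℝ) := by exact_mod_cast Nat.sub_le n h
          nlinarith
  calc |(1/(n:ℝ))^2 * ∑ h ∈ Ico 1 n, ∑ h' ∈ Ico 1 n, (γ h * γ h') *
          ∑ j ∈ range (n - h), ∑ j' ∈ range (n - h'),
            (S4 n j h j' h' / (n:ℝ)^n - U4 n)|
      ≤ (1/(n:ℝ))^2 * ∑ h ∈ Ico 1 n, ∑ h' ∈ Ico 1 n,
          |(γ h * γ h') * ∑ j ∈ range (n - h), ∑ j' ∈ range (n - h'),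
            (S4 n j h j' h' / (n:ℝ)^n - U4 n)| := by
        rw [abs_mul, abs_of_nonneg (by positivity : (0:ℝ) ≤ (1/(n:ℝ))^2)]
        refine mul_le_mul_of_nonneg_left ?_ (by positivity)
        refine le_trans (Finset.abs_sum_le_sum_abs _ _) ?_
        exact Finset.sum_le_sum fun h _ => Finset.abs_sum_le_sum_abs _ _
    _ ≤ (1/(n:ℝ))^2 * ∑ h ∈ Ico 1 n, ∑ h' ∈ Ico 1 n,
          (γ h * γ h') * ((n:ℝ) * 32896) := by
        refine mul_le_mul_of_nonneg_left ?_ (by positivity)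
        refine Finset.sum_le_sum fun h hh => Finset.sum_le_sum fun h' hh' => ?_
        exact hstep h hh h' hh'
    _ = 32896 * (∑ h ∈ Ico 1 n, γ h)^2 / n := by
        have hs2 : (∑ h ∈ Ico 1 n, γ h)^2
            = ∑ h ∈ Ico 1 n, ∑ h' ∈ Ico 1 n, γ h * γ h' := by
          rw [sq, Finset.sum_mul_sum]
        rw [hs2, Finset.mul_sum, Finset.mul_sum, Finset.sum_div]
        refine Finset.sum_congr rfl fun h hh => ?_
        rw [Finset.mul_sum, Finset.mul_sum, Finset.sum_div]
        refine Finset.sum_congr rfl fun h' hh' => ?_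
        field_simp



lemma sumP_le (γ : ℕ → ℝ) (hpos : ∀ h, 1 ≤ h → 0 ≤ γ h)
    (hγ : Summable fun h : ℕ => γ (h + 1)) (n : ℕ) :
    ∑ h ∈ Ico 1 n, γ h ≤ ∑' h : ℕ, γ (h + 1) := by
  have hP : ∑ h ∈ Ico 1 n, γ h = ∑ i ∈ range (n-1), γ (i+1) := by
    rw [Finset.sum_Ico_eq_sum_range]
    exact Finset.sum_congr rfl fun i _ => by rw [add_comm]
  rw [hP]
  exact Summable.sum_le_tsum _ (fun i _ => hpos _ (by omega)) hγ

lemma V_tendsto (γ : ℕ → ℝ) (hpos : ∀ h, 1 ≤ h → 0 ≤ γ h)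
    (hγ : Summable fun h : ℕ => γ (h + 1)) :
    Tendsto (fun n : ℕ => (∑ f : Fin n → Fin n,
        (Xf γ n f - 4 * Real.exp (-2) * ∑' h : ℕ, γ (h + 1))^2) / (n:ℝ)^n)
      atTop (nhds 0) := by
  set Γ := ∑' h : ℕ, γ (h + 1) with hΓdef
  set c : ℝ := 4 * Real.exp (-2) * Γ with hcdef
  have hΓ0 : 0 ≤ Γ := tsum_nonneg fun i => hpos _ (by omega)
  have hL2 : (2 * Real.exp (-1))^2 = 4 * Real.exp (-2) := by
    rw [mul_pow, ← Real.exp_nat_mul]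
    norm_num
  have hEX : Tendsto (fun n : ℕ => (∑ f : Fin n → Fin n, Xf γ n f)/(n:ℝ)^n)
      atTop (nhds c) := by
    have h1 : Tendsto (fun n : ℕ => U2 n * Gn γ n) atTop (nhds c) := by
      have := (UMd_div_tendsto 2).mul (G_tendsto γ hpos hγ)
      rw [hL2] at this
      exact this
    refine Tendsto.congr' ?_ h1
    filter_upwards [eventually_ge_atTop 1] with n hn
    exact (EX_eq γ n hn).symm
  have hEX2 : Tendsto (fun n : ℕ => (∑ f : Fin n → Fin n, (Xf γ n f)^2)/(n:ℝ)^n)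
      atTop (nhds (c^2)) := by
    have hmain : Tendsto (fun n : ℕ => U4 n * (Gn γ n)^2) atTop (nhds (c^2)) := by
      have h4 := (UMd_div_tendsto 4).mul ((G_tendsto γ hpos hγ).pow 2)
      have : (2 * Real.exp (-1))^4 * Γ^2 = c^2 := by
        rw [hcdef, ← hL2]; ring
      rw [this] at h4
      exact h4
    have hdiff : Tendsto (fun n : ℕ =>
        (∑ f : Fin n → Fin n, (Xf γ n f)^2)/(n:ℝ)^n - U4 n * (Gn γ n)^2)
        atTop (nhds 0) := by
      refine squeeze_zero_norm' ?_ (tendsto_const_div_atTop_nhds_zero_nat (32896 * Γ^2))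
      filter_upwards [eventually_ge_atTop 4] with n hn
      rw [Real.norm_eq_abs]
      refine le_trans (EX2_bound γ hpos n hn) ?_
      have hPn := sumP_le γ hpos hγ n
      have hP0 : 0 ≤ ∑ h ∈ Ico 1 n, γ h :=
        Finset.sum_nonneg fun h hh => hpos h (Finset.mem_Ico.mp hh).1
      gcongr
    have := hdiff.add hmain
    rw [zero_add] at this
    refine Tendsto.congr (fun n => by ring) this
  have hVeq : ∀ᶠ n : ℕ in atTop, (∑ f : Fin n → Fin n, (Xf γ n f - c)^2) / (n:ℝ)^n
      = (∑ f : Fin n → Fin n, (Xf γ n f)^2)/(n:ℝ)^n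
        - 2*c*((∑ f : Fin n → Fin n, Xf γ n f)/(n:ℝ)^n) + c^2 := by
    filter_upwards [eventually_ge_atTop 1] with n hn
    have hnn : (0:ℝ) < (n:ℝ)^n := by
      have : (0:ℝ) < n := by exact_mod_cast hn
      positivity
    have hexp : ∑ f : Fin n → Fin n, (Xf γ n f - c)^2
        = (∑ f : Fin n → Fin n, (Xf γ n f)^2)
          - 2*c*(∑ f : Fin n → Fin n, Xf γ n f) + ((n:ℝ)^n) * c^2 := by
      have e : ∀ f : Fin n → Fin n, (Xf γ n f - c)^2
          = (Xf γ n f)^2 - 2*c*(Xf γ n f) + c^2 := fun f => by ring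
      rw [Finset.sum_congr rfl fun f _ => e f, Finset.sum_add_distrib,
        Finset.sum_sub_distrib, ← Finset.mul_sum, Finset.sum_const,
        Finset.card_univ, card_fun_eq, nsmul_eq_mul]
      push_cast
      ring
    rw [hexp]
    field_simp
  have hfinal := (hEX2.sub (hEX.const_mul (2*c))).add_const (c^2)
  have hfinal' : Tendsto (fun n : ℕ =>
      (∑ f : Fin n → Fin n, (Xf γ n f)^2)/(n:ℝ)^n
        - 2*c*((∑ f : Fin n → Fin n, Xf γ n f)/(n:ℝ)^n) + c^2) atTop (nhds 0) := by
    convert hfinal using 2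
    ring
  exact Tendsto.congr' (hVeq.mono fun n hn => hn.symm) hfinal'


lemma cheb (γ : ℕ → ℝ) (c ε : ℝ) (hε : 0 < ε) (n : ℕ) (hn : 1 ≤ n) :
    multinomialMeasure n {f | ε ≤ |Xf γ n f - c|}
      ≤ ENNReal.ofReal (((∑ f : Fin n → Fin n, (Xf γ n f - c)^2)/(n:ℝ)^n) / ε^2) := by
  classical
  have hn0 : (0:ℝ) < n := by exact_mod_cast hn
  have hnn : (0:ℝ) < (n:ℝ)^n := by positivity
  set S : Set (Fin n → Fin n) := {f | ε ≤ |Xf γ n f - c|} with hSdef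
  have hSfin : S.Finite := Set.toFinite S
  have hcount : Measure.count S = hSfin.toFinset.card :=
    Measure.count_apply_finite S hSfin
  have hcard : (hSfin.toFinset.card : ℝ) * ε^2
      ≤ ∑ f : Fin n → Fin n, (Xf γ n f - c)^2 := by
    calc (hSfin.toFinset.card : ℝ) * ε^2
        = ∑ _f ∈ hSfin.toFinset, ε^2 := by
          rw [Finset.sum_const, nsmul_eq_mul]
      _ ≤ ∑ f ∈ hSfin.toFinset, (Xf γ n f - c)^2 := by
          refine Finset.sum_le_sum fun f hf => ?_
          have hfS : ε ≤ |Xf γ n f - c| := by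
            have := (Set.Finite.mem_toFinset hSfin).mp hf
            exact this
          calc ε^2 ≤ |Xf γ n f - c|^2 := by
                have h0 : (0:ℝ) ≤ ε := le_of_lt hε
                exact pow_le_pow_left₀ h0 hfS 2
            _ = (Xf γ n f - c)^2 := sq_abs _
      _ ≤ ∑ f : Fin n → Fin n, (Xf γ n f - c)^2 :=
          Finset.sum_le_sum_of_subset_of_nonneg (Finset.subset_univ _)
            (fun f _ _ => sq_nonneg _)
  have hμ : multinomialMeasure n S
      = ENNReal.ofReal ((hSfin.toFinset.card : ℝ)/(n:ℝ)^n) := by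
    rw [multinomialMeasure, Measure.smul_apply, smul_eq_mul, hcount, card_fun_eq]
    rw [show ((n:ℝ))^n = ((n^n : ℕ):ℝ) from by push_cast; rfl]
    rw [ENNReal.ofReal_div_of_pos (by exact_mod_cast hnn), ENNReal.ofReal_natCast,
      ENNReal.ofReal_natCast, ENNReal.div_eq_inv_mul]
  rw [hμ]
  apply ENNReal.ofReal_le_ofReal
  rw [div_le_div_iff₀ hnn (by positivity : (0:ℝ) < ε^2), div_mul_eq_mul_div,
    mul_div_assoc, div_self (ne_of_gt hnn), mul_one]
  exact hcard


lemma expr_eq (γ : ℕ → ℝ) {n : ℕ} (hn : 1 ≤ n) (f : Fin n → Fin n) :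
    (n : ℝ) * ∑ h ∈ Ico 1 n, γ h * ∑ j ∈ range (n - h),
        |(mw n j f : ℝ) / n - 1 / n| * |(mw n (j + h) f : ℝ) / n - 1 / n|
      = Xf γ n f := by
  have hn0 : (0:ℝ) < n := by exact_mod_cast hn
  rw [Xf, Finset.mul_sum, Finset.mul_sum]
  refine Finset.sum_congr rfl fun h hh => ?_
  have e : ∀ j ∈ range (n - h), |(mw n j f:ℝ)/n - 1/n| * |(mw n (j+h) f:ℝ)/n - 1/n|
      = aaN n j f * aaN n (j+h) f / (n:ℝ)^2 := by
    intro j hj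
    rw [aaN, aaN,
      show (mw n j f:ℝ)/n - 1/n = ((mw n j f:ℝ) - 1)/n from by ring,
      show (mw n (j+h) f:ℝ)/n - 1/n = ((mw n (j+h) f:ℝ) - 1)/n from by ring,
      abs_div, abs_div, abs_of_nonneg (le_of_lt hn0)]
    rw [div_mul_div_comm, sq]
  rw [Finset.sum_congr rfl e, ← Finset.sum_div]
  field_simp

/-- for a summable nonnegative sequence `γ` (indexed by `h ≥ 1`),
`n Σ_{h=1}^{n−1} γ_h Σ_{j=1}^{n−h} |w_j/n − 1/n|·|w_{j+h}/n − 1/n|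
  → 4 e^{−2} Σ_{h=1}^∞ γ_h` in probability. -/
theorem stmt10 (γ : ℕ → ℝ) (hγpos : ∀ h, 1 ≤ h → 0 ≤ γ h)
    (hγ : Summable fun h : ℕ => γ (h + 1)) :
    ∀ ε > (0 : ℝ), Tendsto (fun n : ℕ =>
        multinomialMeasure n
          {f | ε ≤ |(n : ℝ) * ∑ h ∈ Finset.Ico 1 n, γ h *
                  ∑ j ∈ Finset.range (n - h),
                    |(mw n j f : ℝ) / n - 1 / n| * |(mw n (j + h) f : ℝ) / n - 1 / n|
                - 4 * Real.exp (-2) * ∑' h : ℕ, γ (h + 1)|})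
      atTop (nhds 0) := by
  intro ε hε
  set Γ := ∑' h : ℕ, γ (h + 1) with hΓdef
  set c := 4 * Real.exp (-2) * Γ with hcdef
  have hV := V_tendsto γ hγpos hγ
  rw [← hΓdef, ← hcdef] at hV
  have hupper : Tendsto (fun n : ℕ => ENNReal.ofReal
      (((∑ f : Fin n → Fin n, (Xf γ n f - c)^2)/(n:ℝ)^n) / ε^2)) atTop (nhds 0) := by
    have h1 : Tendsto (fun n : ℕ =>
        ((∑ f : Fin n → Fin n, (Xf γ n f - c)^2)/(n:ℝ)^n) / ε^2) atTop (nhds 0) := by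
      simpa using hV.div_const (ε^2)
    have h2 := ENNReal.tendsto_ofReal h1
    simpa using h2
  refine tendsto_of_tendsto_of_tendsto_of_le_of_le' tendsto_const_nhds hupper ?_ ?_
  · exact Filter.Eventually.of_forall (fun n => zero_le)
  · filter_upwards [eventually_ge_atTop 1] with n hn
    have hset : {f : Fin n → Fin n | ε ≤ |(n : ℝ) * ∑ h ∈ Finset.Ico 1 n, γ h *
          ∑ j ∈ Finset.range (n - h),
            |(mw n j f : ℝ) / n - 1 / n| * |(mw n (j + h) f : ℝ) / n - 1 / n| - c|}
        = {f : Fin n → Fin n | ε ≤ |Xf γ n f - c|} := by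
      ext f
      simp only [Set.mem_setOf_eq]
      rw [expr_eq γ hn f]
    rw [hset]
    exact cheb γ c ε hε n hn
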